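/- Let c be a metric (triangle-inequality-satisfying) nonnegative cost function on a finite set V with |V| ≥ 3, and let V' ⊆ V with |V'| ≥ 3. Then the minimum cost of a Hamiltonian cycle on V' (with respect to c) is at most the minimum cost of a Hamiltonian cycle on V. -/

import Mathlib

/-- Cost of traversing a list cyclically (wrapping around at the end). -/
def cycleCost {V : Type*} (c : V → V → ℝ) (l : List V) : ℝ :=
  ∑ i : Fin l.length, c (l.get i) (l.get ⟨((i : ℕ) + 1) % l.length, Nat.mod_lt _ i.pos⟩)

/-- The set of costs of Hamiltonian cycles (tours) on a finset `S`. -/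
def tourCosts {V : Type*} [DecidableEq V] (c : V → V → ℝ) (S : Finset V) : Set ℝ :=
  {x | ∃ l : List V, l.Nodup ∧ l.toFinset = S ∧ cycleCost c l = x}

section Aux

variable {V : Type*}

/-- Cost of traversing a list as an open path (no wraparound). -/
def pathCost (c : V → V → ℝ) : List V → ℝ
  | [] => 0
  | [_] => 0
  | a :: b :: t => c a b + pathCost c (b :: t)

lemma pathCost_nonneg (c : V → V → ℝ) (hnn : ∀ u v, 0 ≤ c u v) :
    ∀ l : List V, 0 ≤ pathCost c l
  | [] => le_refl _
  | [_] => le_refl _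
  | a :: b :: t => by
      have := pathCost_nonneg c hnn (b :: t)
      simp only [pathCost]
      exact add_nonneg (hnn a b) this

lemma cycleCost_nonneg (c : V → V → ℝ) (hnn : ∀ u v, 0 ≤ c u v) (l : List V) :
    0 ≤ cycleCost c l :=
  Finset.sum_nonneg fun _ _ => hnn _ _

lemma pathCost_split (c : V → V → ℝ) (a : V) (l₂ : List V) :
    ∀ l₁ : List V, pathCost c (l₁ ++ a :: l₂) = pathCost c (l₁ ++ [a]) + pathCost c (a :: l₂)
  | [] => by simp [pathCost]
  | [x] => by simp [pathCost]
  | x :: y :: l₁ => by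
      have := pathCost_split c a l₂ (y :: l₁)
      simp only [List.cons_append, List.append_eq, pathCost] at *
      rw [this]; ring

lemma pathCost_triangle_head (c : V → V → ℝ) (hnn : ∀ u v, 0 ≤ c u v)
    (htri : ∀ u v w, c u w ≤ c u v + c v w) (u a : V) (r : List V) :
    pathCost c (u :: r) ≤ c u a + pathCost c (a :: r) := by
  cases r with
  | nil => simpa [pathCost] using hnn u a
  | cons w t =>
      simp only [pathCost]
      have := htri u a w
      linarith

lemma pathCost_filter (c : V → V → ℝ) (hnn : ∀ u v, 0 ≤ c u v)
    (htri : ∀ u v w, c u w ≤ c u v + c v w) (p : V → Bool) (v : V) :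
    ∀ (l : List V) (u : V),
      pathCost c (u :: l.filter p ++ [v]) ≤ pathCost c (u :: l ++ [v])
  | [], u => le_refl _
  | a :: t, u => by
      by_cases hp : p a
      · rw [List.filter_cons_of_pos hp]
        simp only [List.cons_append, List.append_eq, pathCost]
        exact add_le_add (le_refl _) (pathCost_filter c hnn htri p v t a)
      · rw [List.filter_cons_of_neg (by simpa using hp)]
        calc pathCost c (u :: t.filter p ++ [v])
            ≤ c u a + pathCost c (a :: (t.filter p ++ [v])) := by
              simpa using pathCost_triangle_head c hnn htri u a (t.filter p ++ [v])
          _ ≤ c u a + pathCost c (a :: (t ++ [v])) :=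
              add_le_add (le_refl _) (pathCost_filter c hnn htri p v t a)
          _ = pathCost c (u :: a :: t ++ [v]) := rfl

lemma pathCost_eq_sum (c : V → V → ℝ) (d : V) :
    ∀ l : List V,
      pathCost c l = ∑ i ∈ Finset.range (l.length - 1), c (l.getD i d) (l.getD (i+1) d)
  | [] => by simp [pathCost]
  | [a] => by simp [pathCost]
  | a :: b :: t => by
      have ih := pathCost_eq_sum c d (b :: t)
      simp only [pathCost, List.length_cons]
      rw [show (t.length + 1 + 1) - 1 = (t.length + 1 - 1) + 1 by omega,
        Finset.sum_range_succ']
      simp only [List.getD_cons_succ, List.getD_cons_zero]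
      simp only [List.getD_cons_succ, List.length_cons] at ih
      rw [ih]
      ring

lemma cycleCost_eq_pathCost (c : V → V → ℝ) (a : V) (t : List V) :
    cycleCost c (a :: t) = pathCost c ((a :: t) ++ [a]) := by
  rw [pathCost_eq_sum c a]
  unfold cycleCost
  have h1 := Fin.sum_univ_eq_sum_range
    (fun j => c ((a :: t).getD j a) ((a :: t).getD ((j + 1) % (a :: t).length) a))
    ((a :: t).length)
  rw [show (∑ i : Fin (a :: t).length, c ((a :: t).get i)
        ((a :: t).get ⟨((i : ℕ) + 1) % (a :: t).length, Nat.mod_lt _ i.pos⟩))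
      = ∑ i : Fin (a :: t).length, c ((a :: t).getD i a)
        ((a :: t).getD (((i : ℕ) + 1) % (a :: t).length) a) from
    Finset.sum_congr rfl fun i _ => by
      rw [List.get_eq_getElem, List.get_eq_getElem, List.getD_eq_getElem,
        List.getD_eq_getElem], h1]
  have hlen : ((a :: t) ++ [a]).length - 1 = (a :: t).length := by simp
  rw [hlen]
  refine Finset.sum_congr rfl fun i hi => ?_
  rw [Finset.mem_range] at hi
  congr 1
  · rw [List.getD_eq_getElem _ _ hi,
      List.getD_eq_getElem _ _ (by simp at hi ⊢; omega)]
    exact (List.getElem_append_left hi).symm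
  · rcases Nat.lt_or_ge (i+1) (a :: t).length with h | h
    · rw [Nat.mod_eq_of_lt h, List.getD_eq_getElem _ _ h,
        List.getD_eq_getElem _ _ (by simp at hi ⊢; omega)]
      exact (List.getElem_append_left h).symm
    · have he : i + 1 = (a :: t).length := by omega
      rw [he, Nat.mod_self, List.getD_eq_getElem _ _ (by simp),
        List.getD_eq_getElem _ _ (by simp)]
      rw [List.getElem_concat_length rfl]
      simp

lemma cycleCost_rotate (c : V → V → ℝ) (v : V) (l₁ l₂ : List V) :
    cycleCost c (l₁ ++ v :: l₂) = cycleCost c (v :: (l₂ ++ l₁)) := by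
  cases l₁ with
  | nil => simp
  | cons x l₁ =>
      rw [show (x :: l₁) ++ v :: l₂ = x :: (l₁ ++ v :: l₂) from rfl]
      rw [cycleCost_eq_pathCost, cycleCost_eq_pathCost]
      have h1 : ((x :: (l₁ ++ v :: l₂)) ++ [x]) = (x :: l₁) ++ v :: (l₂ ++ [x]) := by simp
      have h2 : ((v :: (l₂ ++ x :: l₁)) ++ [v]) = (v :: l₂) ++ x :: (l₁ ++ [v]) := by simp
      rw [h1, h2, pathCost_split c v (l₂ ++ [x]) (x :: l₁),
        pathCost_split c x (l₁ ++ [v]) (v :: l₂)]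
      simp only [List.cons_append]
      ring

end Aux

/-- for a metric cost function, the minimum tour cost on a subset
`V'` (with `|V'| ≥ 3`, `|V| ≥ 3`) is at most the minimum tour cost on `V`. -/
theorem stmt_1 {V : Type*} [Fintype V] [DecidableEq V] (c : V → V → ℝ)
    (hnn : ∀ u v : V, 0 ≤ c u v)
    (htri : ∀ u v w : V, c u w ≤ c u v + c v w)
    (hV : 3 ≤ Fintype.card V)
    (V' : Finset V) (hV' : 3 ≤ V'.card) :
    sInf (tourCosts c V') ≤ sInf (tourCosts c Finset.univ) := by
  have hAbdd : BddBelow (tourCosts c V') := by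
    refine ⟨0, fun x hx => ?_⟩
    obtain ⟨l, _, _, hcost⟩ := hx
    exact hcost ▸ cycleCost_nonneg c hnn l
  have hBne : (tourCosts c (Finset.univ : Finset V)).Nonempty :=
    ⟨cycleCost c Finset.univ.toList,
      Finset.univ.toList, Finset.nodup_toList _, by simp, rfl⟩
  refine le_csInf hBne fun b hb => ?_
  obtain ⟨l, hnd, htf, hcost⟩ := hb
  obtain ⟨v, hv⟩ : V'.Nonempty := Finset.card_pos.mp (by omega)
  have hvl : v ∈ l := by
    rw [← List.mem_toFinset, htf]; exact Finset.mem_univ v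
  obtain ⟨l₁, l₂, rfl⟩ := List.append_of_mem hvl
  set q := l₂ ++ l₁ with hq
  set p : V → Bool := fun x => decide (x ∈ V') with hpdef
  have hperm : (l₁ ++ v :: l₂).Perm (v :: q) :=
    List.perm_middle.trans ((List.perm_append_comm).cons v)
  have hpv : p v = true := by simp [hpdef, hv]
  have hfilt : (v :: q).filter p = v :: q.filter p := List.filter_cons_of_pos hpv
  have hmem : cycleCost c (v :: q.filter p) ∈ tourCosts c V' := by
    refine ⟨v :: q.filter p, ?_, ?_, rfl⟩
    · rw [← hfilt]
      exact (hperm.nodup hnd).filter p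
    · rw [← hfilt, List.toFinset_filter, (List.toFinset_eq_of_perm _ _ hperm).symm, htf]
      ext x
      simp [hpdef]
  have hle : cycleCost c (v :: q.filter p) ≤ b := by
    rw [← hcost, cycleCost_rotate c v l₁ l₂, cycleCost_eq_pathCost,
      cycleCost_eq_pathCost]
    exact pathCost_filter c hnn htri p v q v
  exact le_trans (csInf_le hAbdd hmem) hle
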